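/- Let (θ_n)_{n≥1} be a sequence of nonzero complex numbers satisfying the Riccati-type equation (θ_{n+1} − 2)θ_n + 1 = 0 for all n ≥ 1. Then either θ_n = 1 for all n ≥ 1, or there exists c ∈ ℂ such that for all n ≥ 1 one has n + c ≠ 0 and θ_n = (n + c + 1)/(n + c). -/

import Mathlib

open Polynomial

/-- The Hahn difference operator `D_ω` acting on polynomials:
`(D_ω f)(x) = (f(x+ω) − f(x))/ω`. -/
noncomputable def Dw (ω : ℂ) (f : Polynomial ℂ) : Polynomial ℂ :=
  C ω⁻¹ * (f.comp (X + C ω) - f)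

/-- A monic polynomial sequence: each `P n` is monic of degree `n`. -/
def MonicPS (P : ℕ → Polynomial ℂ) : Prop :=
  ∀ n, (P n).Monic ∧ (P n).natDegree = n

/-- Three-term recurrence with coefficients `β`, `γ` (where `γ (n+1)` is used). -/
def TTR (P : ℕ → Polynomial ℂ) (β γ : ℕ → ℂ) : Prop :=
  P 0 = 1 ∧ P 1 = X - C (β 0) ∧
    ∀ n : ℕ, P (n + 2) = (X - C (β (n + 1))) * P (n + 1) - C (γ (n + 1)) * P n

/-- Orthogonality of a polynomial sequence with respect to a linear functional. -/
def IsOPSwrt (P : ℕ → Polynomial ℂ) (u : Polynomial ℂ →ₗ[ℂ] ℂ) : Prop :=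
  (∀ n m, n ≠ m → u (P n * P m) = 0) ∧ ∀ n, u (P n * P n) ≠ 0

theorem riccati_solutions
    (θ : ℕ → ℂ) (hne : ∀ n : ℕ, 1 ≤ n → θ n ≠ 0)
    (hric : ∀ n : ℕ, 1 ≤ n → (θ (n + 1) - 2) * θ n + 1 = 0) :
    (∀ n : ℕ, 1 ≤ n → θ n = 1) ∨
      ∃ c : ℂ, ∀ n : ℕ, 1 ≤ n →
        (n : ℂ) + c ≠ 0 ∧ θ n = ((n : ℂ) + c + 1) / ((n : ℂ) + c) := by
  by_cases h1 : θ 1 = 1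
  · left
    intro n hn
    induction n, hn using Nat.le_induction with
    | base => exact h1
    | succ n hn ih =>
      have h := hric n hn
      rw [ih] at h
      linear_combination h
  · right
    refine ⟨(θ 1 - 1)⁻¹ - 1, ?_⟩
    have hd : θ 1 - 1 ≠ 0 := sub_ne_zero.mpr h1
    intro n hn
    induction n, hn using Nat.le_induction with
    | base =>
      constructor
      · push_cast
        simpa using inv_ne_zero hd
      · push_cast
        field_simp
        ring
    | succ n hn ih =>
      obtain ⟨hnc, hθn⟩ := ih
      have hne' := hne n hn
      set c := (θ 1 - 1)⁻¹ - 1 with hc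
      have hnum : (n : ℂ) + c + 1 ≠ 0 := fun h0 => hne' (by rw [hθn, h0, zero_div])
      have h := hric n hn
      constructor
      · push_cast
        convert hnum using 1
        ring
      · have key : θ (n + 1) * ((n : ℂ) + c + 1) = (n : ℂ) + c + 2 := by
          have h2 : θ (n + 1) * θ n = 2 * θ n - 1 := by linear_combination h
          rw [hθn] at h2
          field_simp at h2
          linear_combination h2
        push_cast
        rw [eq_div_iff (by intro h0; exact hnum (by linear_combination h0))]
        linear_combination key
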